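/- Let ρ_β = Z_β^{-1} e^{−βh} be a Gibbs state for a self-adjoint h on finite-dimensional H, with Z_β = Tr[e^{−βh}]. If every U(σ) commutes with H_2 = h⊗1 + 1⊗h, then ρ_β ⋆ ρ_β = ρ_β, i.e. Gibbs states are steady states of the quantum Kac–Boltzmann equation. -/

import Mathlib

open Matrix MeasureTheory
open scoped Matrix.Norms.L2Operator

/-- Tensor (Kronecker) product of operators on `H = ℂ^n`, as an operator on `H ⊗ H`. -/
def tensorMat {n : ℕ} (A B : Matrix (Fin n) (Fin n) ℂ) :
    Matrix (Fin n × Fin n) (Fin n × Fin n) ℂ :=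
  Matrix.of fun p q => A p.1 q.1 * B p.2 q.2

/-- Partial trace over the second tensor factor. -/
noncomputable def ptrace2 {n : ℕ} (M : Matrix (Fin n × Fin n) (Fin n × Fin n) ℂ) :
    Matrix (Fin n) (Fin n) ℂ :=
  Matrix.of fun a b => ∑ k : Fin n, M (a, k) (b, k)

/-- The two-particle Hamiltonian `H_2 = h ⊗ 1 + 1 ⊗ h` on `H ⊗ H`. -/
def H2mat {n : ℕ} (h : Matrix (Fin n) (Fin n) ℂ) :
    Matrix (Fin n × Fin n) (Fin n × Fin n) ℂ :=
  Matrix.of fun p q =>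
    h p.1 q.1 * (if p.2 = q.2 then (1 : ℂ) else 0) +
      (if p.1 = q.1 then (1 : ℂ) else 0) * h p.2 q.2

/-- The averaged conjugation operator `Q(X) = ∫ U(σ) X U(σ)* dν(σ)` on `B(H ⊗ H)`. -/
noncomputable def Qop {C : Type*} [MeasurableSpace C] {n : ℕ}
    (ν : Measure C) (U : C → Matrix (Fin n × Fin n) (Fin n × Fin n) ℂ)
    (X : Matrix (Fin n × Fin n) (Fin n × Fin n) ℂ) :
    Matrix (Fin n × Fin n) (Fin n × Fin n) ℂ :=
  ∫ σ, U σ * X * (U σ)ᴴ ∂ν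

/-- The quantum Wild convolution `A ⋆ B = Tr₂[Q(A ⊗ B)]`. -/
noncomputable def wildConv {C : Type*} [MeasurableSpace C] {n : ℕ}
    (ν : Measure C) (U : C → Matrix (Fin n × Fin n) (Fin n × Fin n) ℂ)
    (A B : Matrix (Fin n) (Fin n) ℂ) : Matrix (Fin n) (Fin n) ℂ :=
  ptrace2 (Qop ν U (tensorMat A B))

/-- The Gibbs state `ρ_β = e^{−βh} / Tr[e^{−βh}]`. -/
noncomputable def gibbsState {n : ℕ} (β : ℝ) (h : Matrix (Fin n) (Fin n) ℂ) :
    Matrix (Fin n) (Fin n) ℂ :=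
  ((NormedSpace.exp ((-β) • h)).trace)⁻¹ • NormedSpace.exp ((-β) • h)

lemma tensorMat_mul {n : ℕ} (A B C D : Matrix (Fin n) (Fin n) ℂ) :
    tensorMat A B * tensorMat C D = tensorMat (A * C) (B * D) := by
  ext p q
  simp only [tensorMat, Matrix.mul_apply, Matrix.of_apply, Fintype.sum_prod_type,
    Finset.sum_mul_sum]
  congr 1; ext i; congr 1; ext j; ring

lemma tensorMat_one {n : ℕ} : tensorMat (1 : Matrix (Fin n) (Fin n) ℂ) 1 = 1 := by
  ext p q
  simp only [tensorMat, Matrix.of_apply, Matrix.one_apply, Prod.ext_iff]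
  by_cases h1 : p.1 = q.1 <;> by_cases h2 : p.2 = q.2 <;> simp [h1, h2]

noncomputable def tensorL {n : ℕ} :
    Matrix (Fin n) (Fin n) ℂ →ₐ[ℂ] Matrix (Fin n × Fin n) (Fin n × Fin n) ℂ :=
  { toFun := fun A => tensorMat A 1
    map_one' := tensorMat_one
    map_mul' := fun A B => by rw [tensorMat_mul, one_mul]
    map_zero' := by ext p q; simp [tensorMat]
    map_add' := fun A B => by ext p q; simp [tensorMat, add_mul]
    commutes' := fun r => by
      ext p q
      simp [tensorMat, Matrix.algebraMap_matrix_apply, Prod.ext_iff, Matrix.one_apply]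
      by_cases h1 : p.1 = q.1 <;> by_cases h2 : p.2 = q.2 <;> simp [h1, h2] }

noncomputable def tensorR {n : ℕ} :
    Matrix (Fin n) (Fin n) ℂ →ₐ[ℂ] Matrix (Fin n × Fin n) (Fin n × Fin n) ℂ :=
  { toFun := fun A => tensorMat 1 A
    map_one' := tensorMat_one
    map_mul' := fun A B => by rw [tensorMat_mul, one_mul]
    map_zero' := by ext p q; simp [tensorMat]
    map_add' := fun A B => by ext p q; simp [tensorMat, mul_add]
    commutes' := fun r => by
      ext p q
      simp [tensorMat, Matrix.algebraMap_matrix_apply, Prod.ext_iff, Matrix.one_apply]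
      by_cases h1 : p.1 = q.1 <;> by_cases h2 : p.2 = q.2 <;> simp [h1, h2] }

lemma tensorL_cont {n : ℕ} : Continuous (tensorL (n := n)) :=
  LinearMap.continuous_of_finiteDimensional (tensorL (n := n)).toLinearMap

lemma tensorR_cont {n : ℕ} : Continuous (tensorR (n := n)) :=
  LinearMap.continuous_of_finiteDimensional (tensorR (n := n)).toLinearMap

lemma tensorMat_exp {n : ℕ} (A : Matrix (Fin n) (Fin n) ℂ) :
    tensorMat (NormedSpace.exp A) (NormedSpace.exp A)
      = NormedSpace.exp (tensorMat A 1 + tensorMat 1 A) := by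
  have hc : Commute (tensorMat A (1 : Matrix (Fin n) (Fin n) ℂ)) (tensorMat 1 A) := by
    simp [Commute, SemiconjBy, tensorMat_mul]
  rw [Matrix.exp_add_of_commute _ _ hc,
    show tensorMat A 1 = tensorL A from rfl, show tensorMat 1 A = tensorR A from rfl,
    ← NormedSpace.map_exp_of_mem_ball (𝕂 := ℂ) tensorL tensorL_cont A ((NormedSpace.expSeries_radius_eq_top ℂ (Matrix (Fin n) (Fin n) ℂ)).symm ▸ edist_lt_top _ _),
    ← NormedSpace.map_exp_of_mem_ball (𝕂 := ℂ) tensorR tensorR_cont A ((NormedSpace.expSeries_radius_eq_top ℂ (Matrix (Fin n) (Fin n) ℂ)).symm ▸ edist_lt_top _ _)]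
  show _ = tensorMat _ 1 * tensorMat 1 _
  rw [tensorMat_mul, mul_one, one_mul]

lemma H2_decomp {n : ℕ} (β : ℝ) (h : Matrix (Fin n) (Fin n) ℂ) :
    (-β) • H2mat h = tensorMat ((-β) • h) 1 + tensorMat 1 ((-β) • h) := by
  ext p q
  simp only [H2mat, tensorMat, Matrix.smul_apply, Matrix.add_apply, Matrix.of_apply,
    Matrix.one_apply, Complex.real_smul]
  push_cast
  ring

/-- **Gibbs states are steady states** of the quantum Kac–Boltzmann equation:
if every `U(σ)` commutes with `H_2 = h ⊗ 1 + 1 ⊗ h`, then `ρ_β ⋆ ρ_β = ρ_β`. -/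
theorem gibbs_steady_state {C : Type*} [MetricSpace C] [CompactSpace C]
    [MeasurableSpace C] [BorelSpace C] {n : ℕ} [NeZero n]
    (ν : Measure C) [IsProbabilityMeasure ν]
    (U : C → Matrix (Fin n × Fin n) (Fin n × Fin n) ℂ)
    (hUcont : Continuous U)
    (hUunit : ∀ σ, U σ ∈ Matrix.unitaryGroup (Fin n × Fin n) ℂ)
    (h : Matrix (Fin n) (Fin n) ℂ) (hherm : h.IsHermitian)
    (hUcomm : ∀ σ, Commute (U σ) (H2mat h)) (β : ℝ) :
    wildConv ν U (gibbsState β h) (gibbsState β h) = gibbsState β h := by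
  set E := NormedSpace.exp ((-β) • h) with hE
  set c := E.trace with hc
  have hTE : tensorMat E E = NormedSpace.exp ((-β) • H2mat h) := by
    rw [H2_decomp, ← tensorMat_exp]
  -- the exp of H2 is fixed under conjugation by each U σ
  have hfix : ∀ σ, U σ * tensorMat E E * (U σ)ᴴ = tensorMat E E := by
    intro σ
    have hcomm : Commute (U σ) (tensorMat E E) := by
      rw [hTE]
      exact ((hUcomm σ).smul_right (-β)).exp_right
    rw [hcomm.eq, mul_assoc, ← Matrix.star_eq_conjTranspose,
      (Matrix.mem_unitaryGroup_iff.mp (hUunit σ)), mul_one]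
  -- tensorMat of scaled states
  have hsc : tensorMat (gibbsState β h) (gibbsState β h)
      = (c⁻¹ * c⁻¹) • tensorMat E E := by
    ext p q
    simp only [tensorMat, gibbsState, Matrix.smul_apply, Matrix.of_apply, ← hE, smul_eq_mul]
    ring
  have hQ : Qop ν U (tensorMat (gibbsState β h) (gibbsState β h))
      = (c⁻¹ * c⁻¹) • tensorMat E E := by
    rw [Qop]
    have : (fun σ => U σ * ((c⁻¹ * c⁻¹) • tensorMat E E) * (U σ)ᴴ)
        = fun _ => (c⁻¹ * c⁻¹) • tensorMat E E := by
      funext σ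
      rw [Matrix.mul_smul, Matrix.smul_mul, hfix σ]
    rw [hsc, this, integral_const, probReal_univ, one_smul]
  rw [wildConv, hQ]
  -- partial trace
  have hpt : ptrace2 ((c⁻¹ * c⁻¹) • tensorMat E E) = (c⁻¹ * c⁻¹ * c) • E := by
    ext a b
    simp only [ptrace2, tensorMat, Matrix.smul_apply, Matrix.of_apply, smul_eq_mul]
    have hsum : ∑ x : Fin n, c⁻¹ * c⁻¹ * (E a b * E x x)
        = c⁻¹ * c⁻¹ * E a b * ∑ x : Fin n, E x x := by
      rw [Finset.mul_sum]; congr 1; ext x; ring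
    have htr : (∑ x : Fin n, E x x) = c := by simp [hc, Matrix.trace, Matrix.diag]
    rw [hsum, htr]; ring
  rw [hpt, gibbsState, ← hE, ← hc]
  congr 1
  by_cases h0 : c = 0
  · simp [h0]
  · field_simp
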